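/- Under the standing hypotheses on g, for every u ∈ C it holds that g(u) = g(⊤) ⊓ □_g(u). (Proposition 4.7, identity (12).) -/

import Mathlib

/-- An element is completely join-prime. -/
def CJPrime {C : Type*} [CompleteLattice C] (j : C) : Prop :=
  j ≠ ⊥ ∧ ∀ S : Set C, j ≤ sSup S → ∃ s ∈ S, j ≤ s

/-- An element is completely meet-prime. -/
def CMPrime {C : Type*} [CompleteLattice C] (m : C) : Prop :=
  m ≠ ⊤ ∧ ∀ S : Set C, sInf S ≤ m → ∃ s ∈ S, s ≤ m

/-- ◇_f(u) = ⋁ { f j | j completely join-prime, j ≤ u }. -/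
def diam {C D : Type*} [CompleteLattice C] [CompleteLattice D]
    (f : C → D) (u : C) : D :=
  sSup (f '' {j | CJPrime j ∧ j ≤ u})

/-- ■_f(v) = ⋁ { j | j completely join-prime, f j ≤ v }. -/
def bsq {C D : Type*} [CompleteLattice C] [CompleteLattice D]
    (f : C → D) (v : D) : C :=
  sSup {j | CJPrime j ∧ f j ≤ v}

/-- □_g(u) = ⋀ { g m | m completely meet-prime, u ≤ m }. -/
def boxg {C D : Type*} [CompleteLattice C] [CompleteLattice D]
    (g : C → D) (u : C) : D :=
  sInf (g '' {m | CMPrime m ∧ u ≤ m})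

/-- ◆_g(v) = ⋀ { m | m completely meet-prime, v ≤ g m }. -/
def bdiam {C D : Type*} [CompleteLattice C] [CompleteLattice D]
    (g : C → D) (v : D) : C :=
  sInf {m | CMPrime m ∧ v ≤ g m}

/-- Every element is the sup of the completely join-primes below it. -/
def JoinPerfect (C : Type*) [CompleteLattice C] : Prop :=
  ∀ u : C, u = sSup {j | CJPrime j ∧ j ≤ u}

/-- Every element is the inf of the completely meet-primes above it. -/
def MeetPerfect (C : Type*) [CompleteLattice C] : Prop :=
  ∀ u : C, u = sInf {m | CMPrime m ∧ u ≤ m}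

/-- `(C, e)` is a canonical extension of the bounded distributive lattice `A`. -/
structure IsCanonicalExtension {A C : Type*} [DistribLattice A] [BoundedOrder A]
    [CompleteLattice C] (e : A → C) : Prop where
  injective : Function.Injective e
  map_bot : e ⊥ = ⊥
  map_top : e ⊤ = ⊤
  map_inf : ∀ a b : A, e (a ⊓ b) = e a ⊓ e b
  map_sup : ∀ a b : A, e (a ⊔ b) = e a ⊔ e b
  dense_joinOfMeets : ∀ u : C, ∃ 𝒮 : Set (Set A),
      u = sSup ((fun S => sInf (e '' S)) '' 𝒮)
  dense_meetOfJoins : ∀ u : C, ∃ 𝒮 : Set (Set A),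
      u = sInf ((fun S => sSup (e '' S)) '' 𝒮)
  compact : ∀ S T : Set A, sInf (e '' S) ≤ sSup (e '' T) →
      ∃ F : Finset A, ↑F ⊆ S ∧ ∃ G : Finset A, ↑G ⊆ T ∧ F.inf id ≤ G.sup id

/-- Closed elements of the canonical extension: meets of subsets of `e(A)`. -/
def ClosedElem {A C : Type*} [CompleteLattice C] (e : A → C) (x : C) : Prop :=
  ∃ S : Set A, x = sInf (e '' S)

/-- Open elements of the canonical extension: joins of subsets of `e(A)`. -/
def OpenElem {A C : Type*} [CompleteLattice C] (e : A → C) (x : C) : Prop :=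
  ∃ S : Set A, x = sSup (e '' S)

/-- Nonempty downward-directed family. -/
def DownDir {C : Type*} [Preorder C] (𝒞 : Set C) : Prop :=
  𝒞.Nonempty ∧ ∀ x ∈ 𝒞, ∀ y ∈ 𝒞, ∃ z ∈ 𝒞, z ≤ x ∧ z ≤ y

/-- Nonempty upward-directed family. -/
def UpDir {C : Type*} [Preorder C] (𝒪 : Set C) : Prop :=
  𝒪.Nonempty ∧ ∀ x ∈ 𝒪, ∀ y ∈ 𝒪, ∃ z ∈ 𝒪, x ≤ z ∧ y ≤ z

/-- `h` preserves down-directed meets of closed elements. -/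
def ClosedEsakia {A C D : Type*} [CompleteLattice C] [CompleteLattice D]
    (e : A → C) (h : C → D) : Prop :=
  ∀ 𝒞 : Set C, DownDir 𝒞 → (∀ c ∈ 𝒞, ClosedElem e c) →
    h (sInf 𝒞) = sInf (h '' 𝒞)

/-- `h` preserves up-directed joins of open elements. -/
def OpenEsakia {A C D : Type*} [CompleteLattice C] [CompleteLattice D]
    (e : A → C) (h : C → D) : Prop :=
  ∀ 𝒪 : Set C, UpDir 𝒪 → (∀ o ∈ 𝒪, OpenElem e o) →
    h (sSup 𝒪) = sSup (h '' 𝒪)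

section MyAux
set_option linter.unusedSectionVars false

open Classical in
/-- Filter closure of a subset of a bounded lattice. -/
def myFCl {A : Type*} [Lattice A] [BoundedOrder A] (S : Set A) : Set A :=
  {x | ∃ F : Finset A, ↑F ⊆ S ∧ F.inf id ≤ x}

/-- Ideal closure of a subset of a bounded lattice. -/
def myICl {A : Type*} [Lattice A] [BoundedOrder A] (S : Set A) : Set A :=
  {x | ∃ F : Finset A, ↑F ⊆ S ∧ x ≤ F.sup id}

def myKappa {C : Type*} [CompleteLattice C] (p : C) : C :=
  sSup {x | ¬ p ≤ x}

section MyLemmas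

variable {A C : Type*} [DistribLattice A] [BoundedOrder A] [CompleteLattice C]
  {e : A → C}

lemma my_e_mono (hce : IsCanonicalExtension e) : Monotone e := fun a b hab => by
  have : e a = e a ⊓ e b := by rw [← hce.map_inf, inf_eq_left.mpr hab]
  rw [this]; exact inf_le_right

lemma my_subset_fCl (S : Set A) : S ⊆ myFCl S := fun a ha =>
  ⟨{a}, by simpa using ha, by simp⟩

lemma my_top_mem_fCl (S : Set A) : ⊤ ∈ myFCl S := ⟨∅, by simp, by simp⟩

lemma my_inf_mem_fCl {S : Set A} {x y : A} (hx : x ∈ myFCl S) (hy : y ∈ myFCl S) :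
    x ⊓ y ∈ myFCl S := by
  classical
  obtain ⟨F, hF, hFx⟩ := hx
  obtain ⟨G, hG, hGy⟩ := hy
  refine ⟨F ∪ G, by simp [Set.union_subset_iff, hF, hG], le_inf ?_ ?_⟩
  · exact le_trans (Finset.inf_mono Finset.subset_union_left) hFx
  · exact le_trans (Finset.inf_mono Finset.subset_union_right) hGy

lemma my_fCl_mono {S T : Set A} (h : S ⊆ T) : myFCl S ⊆ myFCl T := by
  rintro x ⟨F, hF, hFx⟩; exact ⟨F, hF.trans h, hFx⟩

lemma my_sInf_image_le (hce : IsCanonicalExtension e) {S : Set A} {F : Finset A} (h : ↑F ⊆ S) :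
    sInf (e '' S) ≤ e (F.inf id) := by
  classical
  induction F using Finset.induction_on with
  | empty => simp [hce.map_top]
  | @insert a F ha ih =>
      rw [Finset.inf_insert, hce.map_inf]
      have h1 : a ∈ S := h (by simp)
      have h2 : ↑F ⊆ S := fun z hz => h (by simp [hz])
      exact le_inf (sInf_le ⟨a, h1, rfl⟩) (ih h2)

lemma my_e_le_sSup_image (hce : IsCanonicalExtension e) {S : Set A} {F : Finset A} (h : ↑F ⊆ S) :
    e (F.sup id) ≤ sSup (e '' S) := by
  classical
  induction F using Finset.induction_on with
  | empty => simp [hce.map_bot]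
  | @insert a F ha ih =>
      rw [Finset.sup_insert, hce.map_sup]
      have h1 : a ∈ S := h (by simp)
      have h2 : ↑F ⊆ S := fun z hz => h (by simp [hz])
      exact sup_le (le_sSup ⟨a, h1, rfl⟩) (ih h2)

lemma my_sInf_fCl (hce : IsCanonicalExtension e) (S : Set A) : sInf (e '' myFCl S) = sInf (e '' S) := by
  apply le_antisymm
  · exact sInf_le_sInf (Set.image_mono (my_subset_fCl S))
  · apply le_sInf
    rintro _ ⟨x, ⟨F, hF, hFx⟩, rfl⟩
    exact le_trans (my_sInf_image_le hce hF) (my_e_mono hce hFx)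

lemma my_sSup_iCl (hce : IsCanonicalExtension e) (S : Set A) : sSup (e '' myICl S) = sSup (e '' S) := by
  apply le_antisymm
  · apply sSup_le
    rintro _ ⟨x, ⟨F, hF, hFx⟩, rfl⟩
    exact le_trans (my_e_mono hce hFx) (my_e_le_sSup_image hce hF)
  · refine sSup_le_sSup (Set.image_mono ?_)
    exact fun a ha => ⟨{a}, by simpa using ha, by simp⟩

lemma my_closed_e (a : A) : ClosedElem e (e a) := ⟨{a}, by simp⟩

lemma my_open_e (a : A) : OpenElem e (e a) := ⟨{a}, by simp⟩

lemma my_closed_top : ClosedElem e (⊤ : C) := ⟨∅, by simp⟩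

lemma my_closed_inf {c c' : C} (hc : ClosedElem e c) (hc' : ClosedElem e c') :
    ClosedElem e (c ⊓ c') := by
  obtain ⟨S₁, rfl⟩ := hc
  obtain ⟨S₂, rfl⟩ := hc'
  exact ⟨S₁ ∪ S₂, by rw [Set.image_union, sInf_union]⟩

lemma my_downDir_fCl (hce : IsCanonicalExtension e) (S : Set A) : DownDir (e '' myFCl S) := by
  refine ⟨⟨e ⊤, ⟨⊤, my_top_mem_fCl S, rfl⟩⟩, ?_⟩
  rintro _ ⟨a, ha, rfl⟩ _ ⟨b, hb, rfl⟩
  refine ⟨e (a ⊓ b), ⟨a ⊓ b, my_inf_mem_fCl ha hb, rfl⟩, ?_, ?_⟩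
  · exact my_e_mono hce inf_le_left
  · exact my_e_mono hce inf_le_right

lemma my_upDir_iCl (hce : IsCanonicalExtension e) (S : Set A) : UpDir (e '' myICl S) := by
  refine ⟨⟨e ⊥, ⟨⊥, ⟨∅, by simp, by simp⟩, rfl⟩⟩, ?_⟩
  rintro _ ⟨a, ⟨F, hF, hFa⟩, rfl⟩ _ ⟨b, ⟨G, hG, hGb⟩, rfl⟩
  classical
  refine ⟨e (a ⊔ b), ⟨a ⊔ b, ⟨F ∪ G, by simp [Set.union_subset_iff, hF, hG], ?_⟩, rfl⟩,
    my_e_mono hce le_sup_left, my_e_mono hce le_sup_right⟩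
  refine sup_le (hFa.trans ?_) (hGb.trans ?_)
  · exact Finset.sup_mono (fun z hz => Finset.mem_union_left _ hz)
  · exact Finset.sup_mono (fun z hz => Finset.mem_union_right _ hz)

variable {D : Type*} [CompleteLattice D] {g : C → D}

lemma my_g_sInf (hce : IsCanonicalExtension e) (hgcE : ClosedEsakia e g) (S : Set A) :
    g (sInf (e '' S)) = sInf ((fun a => g (e a)) '' myFCl S) := by
  rw [← my_sInf_fCl hce S]
  rw [hgcE (e '' myFCl S) (my_downDir_fCl hce S) (by rintro _ ⟨a, _, rfl⟩; exact my_closed_e a)]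
  rw [Set.image_image]

lemma my_g_inf_closed (hce : IsCanonicalExtension e) (hgcE : ClosedEsakia e g) (hg : Monotone g)
    (hmul : ∀ a b : A, g (e a) ⊓ g (e b) ≤ g (e (a ⊓ b)))
    {c c' : C} (hc : ClosedElem e c) (hc' : ClosedElem e c') :
    g (c ⊓ c') = g c ⊓ g c' := by
  classical
  obtain ⟨S₁, rfl⟩ := hc
  obtain ⟨S₂, rfl⟩ := hc'
  have hun : sInf (e '' S₁) ⊓ sInf (e '' S₂) = sInf (e '' (S₁ ∪ S₂)) := by
    rw [Set.image_union, sInf_union]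
  rw [hun, my_g_sInf hce hgcE, my_g_sInf hce hgcE, my_g_sInf hce hgcE]
  apply le_antisymm
  · refine le_inf (sInf_le_sInf ?_) (sInf_le_sInf ?_) <;>
      exact Set.image_mono (my_fCl_mono (by simp))
  · apply le_sInf
    rintro _ ⟨x, ⟨F, hF, hFx⟩, rfl⟩
    set F₁ := F.filter (· ∈ S₁) with hF₁def
    set F₂ := F.filter (· ∉ S₁) with hF₂def
    have hF₁ : ↑F₁ ⊆ S₁ := by
      intro z hz; simp only [hF₁def, Finset.coe_filter, Set.mem_setOf_eq] at hz; exact hz.2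
    have hF₂ : ↑F₂ ⊆ S₂ := by
      intro z hz; simp only [hF₂def, Finset.coe_filter, Set.mem_setOf_eq] at hz
      rcases hF hz.1 with h | h
      · exact absurd h hz.2
      · exact h
    have ha : F₁.inf id ∈ myFCl S₁ := ⟨F₁, hF₁, le_rfl⟩
    have hb : F₂.inf id ∈ myFCl S₂ := ⟨F₂, hF₂, le_rfl⟩
    have hab : F₁.inf id ⊓ F₂.inf id ≤ x := by
      refine le_trans ?_ hFx
      apply Finset.le_inf
      intro y hy
      by_cases hyS : y ∈ S₁
      · exact inf_le_left.trans (Finset.inf_le (by simp [hF₁def, hy, hyS]))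
      · exact inf_le_right.trans (Finset.inf_le (by simp [hF₂def, hy, hyS]))
    calc sInf ((fun a => g (e a)) '' myFCl S₁) ⊓ sInf ((fun a => g (e a)) '' myFCl S₂)
        ≤ g (e (F₁.inf id)) ⊓ g (e (F₂.inf id)) :=
          inf_le_inf (sInf_le ⟨_, ha, rfl⟩) (sInf_le ⟨_, hb, rfl⟩)
      _ ≤ g (e (F₁.inf id ⊓ F₂.inf id)) := hmul _ _
      _ ≤ g (e x) := hg (my_e_mono hce hab)

lemma my_open_elim (hce : IsCanonicalExtension e) (hgoE : OpenEsakia e g) {o : C} (ho : OpenElem e o) {n : D}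
    (hn : ¬ g o ≤ n) : ∃ a : A, e a ≤ o ∧ ¬ g (e a) ≤ n := by
  by_contra hcon
  push_neg at hcon
  apply hn
  obtain ⟨S, rfl⟩ := ho
  rw [← my_sSup_iCl hce S,
    hgoE (e '' myICl S) (my_upDir_iCl hce S) (by rintro _ ⟨a, _, rfl⟩; exact my_open_e a)]
  apply sSup_le
  rintro _ ⟨_, ⟨a, ha, rfl⟩, rfl⟩
  refine hcon a ?_
  rw [← my_sSup_iCl hce S]
  exact le_sSup ⟨a, ha, rfl⟩

end MyLemmas

section Kappa

variable {C : Type*} [CompleteLattice C]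

lemma my_le_kappa {p : C} (hp : CJPrime p) (x : C) : x ≤ myKappa p ↔ ¬ p ≤ x := by
  constructor
  · intro h hpx
    obtain ⟨s, hs, hps⟩ := hp.2 _ (hpx.trans h)
    exact hs hps
  · intro h
    exact le_sSup h

lemma my_cmprime_kappa {p : C} (hp : CJPrime p) : CMPrime (myKappa p) := by
  constructor
  · intro h
    exact (my_le_kappa hp (myKappa p)).1 le_rfl (h ▸ le_top)
  · intro S hS
    have hps : ¬ p ≤ sInf S := (my_le_kappa hp _).1 hS
    have : ∃ s ∈ S, ¬ p ≤ s := by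
      by_contra h
      push_neg at h
      exact hps (le_sInf h)
    obtain ⟨s, hs, hps'⟩ := this
    exact ⟨s, hs, (my_le_kappa hp s).2 hps'⟩

end Kappa

lemma my_cmprime_open {A C : Type*} [DistribLattice A] [BoundedOrder A] [CompleteLattice C]
    {e : A → C} (hce : IsCanonicalExtension e) {m : C} (hm : CMPrime m) : OpenElem e m := by
  obtain ⟨𝒮, h𝒮⟩ := hce.dense_meetOfJoins m
  obtain ⟨s, hs, hsm⟩ := hm.2 _ h𝒮.ge
  have hms : m ≤ s := by rw [h𝒮]; exact sInf_le hs
  obtain ⟨S, -, rfl⟩ := hs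
  exact ⟨S, le_antisymm hms hsm⟩

end MyAux

/-- Proposition 4.7, identity (12): under the standing hypotheses on `g`,
`g u = g ⊤ ⊓ □_g u` for every `u ∈ C`. -/
theorem stmt10 {A B C D : Type*} [DistribLattice A] [BoundedOrder A]
    [DistribLattice B] [BoundedOrder B] [CompleteLattice C] [CompleteLattice D]
    (eA : A → C) (eB : B → D)
    (hceA : IsCanonicalExtension eA) (hceB : IsCanonicalExtension eB)
    (hCj : JoinPerfect C) (hCm : MeetPerfect C)
    (hDj : JoinPerfect D) (hDm : MeetPerfect D)
    (g : C → D) (hg : Monotone g)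
    (hgcE : ClosedEsakia eA g) (hgoE : OpenEsakia eA g)
    (hop : ∀ a : A, OpenElem eB (g (eA a)))
    (hmul : ∀ a b : A, g (eA a) ⊓ g (eA b) ≤ g (eA (a ⊓ b))) :
    ∀ u : C, g u = g ⊤ ⊓ boxg g u := by
  intro u
  apply le_antisymm
  · refine le_inf (hg le_top) (le_sInf ?_)
    rintro _ ⟨m, ⟨hm, hum⟩, rfl⟩
    exact hg hum
  · conv_rhs => rw [hDm (g u)]
    apply le_sInf
    rintro n ⟨hn, hgun⟩
    by_cases hgt : g ⊤ ≤ n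
    · exact inf_le_left.trans hgt
    · -- the crux: find a completely meet-prime m ≥ u with g m ≤ n
      set 𝒮 : Set C := {c | ClosedElem eA c ∧ ¬ g c ≤ n} with h𝒮def
      have hdd : DownDir 𝒮 := by
        refine ⟨⟨⊤, my_closed_top, hgt⟩, ?_⟩
        intro c hc c' hc'
        refine ⟨c ⊓ c', ⟨my_closed_inf hc.1 hc'.1, ?_⟩, inf_le_left, inf_le_right⟩
        rw [my_g_inf_closed hceA hgcE hg hmul hc.1 hc'.1]
        intro hle
        have : sInf {g c, g c'} ≤ n := by rwa [sInf_pair]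
        obtain ⟨d, hd, hdn⟩ := hn.2 _ this
        rcases hd with rfl | hd
        · exact hc.2 hdn
        · rw [Set.mem_singleton_iff] at hd
          exact hc'.2 (hd ▸ hdn)
      have hEs := hgcE 𝒮 hdd (fun c hc => hc.1)
      have hgcstar : ¬ g (sInf 𝒮) ≤ n := by
        rw [hEs]
        intro h
        obtain ⟨d, ⟨c, hc, rfl⟩, hdn⟩ := hn.2 _ h
        exact hc.2 hdn
      have hcu : ¬ sInf 𝒮 ≤ u := fun h => hgcstar ((hg h).trans hgun)
      obtain ⟨p, ⟨hp, hpc⟩, hpu⟩ : ∃ p, (CJPrime p ∧ p ≤ sInf 𝒮) ∧ ¬ p ≤ u := by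
        by_contra h
        push_neg at h
        apply hcu
        conv_lhs => rw [hCj (sInf 𝒮)]
        exact sSup_le (fun j hj => h j hj)
      have hum : u ≤ myKappa p := (my_le_kappa hp u).2 hpu
      have hmP : CMPrime (myKappa p) := my_cmprime_kappa hp
      have hgm : g (myKappa p) ≤ n := by
        by_contra hgm
        obtain ⟨a, hao, han⟩ := my_open_elim hceA hgoE (my_cmprime_open hceA hmP) hgm
        have hmem : eA a ∈ 𝒮 := ⟨my_closed_e a, han⟩
        have : p ≤ myKappa p := (hpc.trans (sInf_le hmem)).trans hao
        exact (my_le_kappa hp _).1 le_rfl this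
      refine inf_le_right.trans ((sInf_le ?_).trans hgm)
      exact ⟨myKappa p, ⟨hmP, hum⟩, rfl⟩
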